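/- Link condition lifting: Let A : X → Y and E : Y → Z be bounded linear operators between Hilbert spaces, T = E^* A, and ψ an index function. If there exist constants 0 < m ≤ 1 ≤ M < ∞ with m ||ψ(AA^*) v||_Y ≤ ||(EE^*)^{1/2} v||_Y ≤ M ||ψ(AA^*) v||_Y for all v ∈ Y, then for Θ(λ) := √λ ψ(λ) one has m ||Θ(A^*A) w||_X ≤ ||(T^*T)^{1/2} w||_X ≤ M ||Θ(A^*A) w||_X for all w ∈ X. -/

import Mathlib

open ContinuousLinearMap

/-- An index function: continuous, non-decreasing, positive on `(0,∞)`, vanishing at `0`. -/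
def IndexFun (φ : ℝ → ℝ) : Prop :=
  ContinuousOn φ (Set.Ici 0) ∧ MonotoneOn φ (Set.Ici 0) ∧ (∀ t > 0, 0 < φ t) ∧ φ 0 = 0

section Auxiliary

open scoped InnerProductSpace

variable {H X Z : Type*}
    [NormedAddCommGroup H] [InnerProductSpace ℂ H] [CompleteSpace H]
    [NormedAddCommGroup X] [InnerProductSpace ℂ X] [CompleteSpace X]
    [NormedAddCommGroup Z] [InnerProductSpace ℂ Z] [CompleteSpace Z]

lemma adj_comp_self_nonneg (A : X →L[ℂ] Z) : (0 : X →L[ℂ] X) ≤ (adjoint A).comp A := by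
  rw [ContinuousLinearMap.nonneg_iff_isPositive]
  exact ContinuousLinearMap.isPositive_adjoint_comp_self A

lemma self_comp_adj_nonneg (A : X →L[ℂ] Z) : (0 : Z →L[ℂ] Z) ≤ A.comp (adjoint A) := by
  simpa using adj_comp_self_nonneg (adjoint A)

lemma spectrum_subset_Icc (A : X →L[ℂ] X) (h : (0:X →L[ℂ] X) ≤ A) :
    spectrum ℝ A ⊆ Set.Icc 0 (‖A‖ * ‖(1 : X →L[ℂ] X)‖) := by
  intro x hx
  refine ⟨spectrum_nonneg_of_nonneg h hx, ?_⟩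
  simpa using (abs_le.mp (by simpa using spectrum.norm_le_norm_mul_of_mem hx)).2

set_option maxHeartbeats 1000000 in
lemma intertwine (A : X →L[ℂ] Z) {R : ℝ} (hR : (0:ℝ) ≤ R)
    (ha : spectrum ℝ (A.comp (adjoint A)) ⊆ Set.Icc 0 R)
    (hb : spectrum ℝ ((adjoint A).comp A) ⊆ Set.Icc 0 R)
    (f : ℝ → ℝ) (hf : ContinuousOn f (Set.Icc 0 R)) :
    (cfc f (A.comp (adjoint A))).comp A = A.comp (cfc f ((adjoint A).comp A)) := by
  set a := A.comp (adjoint A) with ha_def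
  set b := (adjoint A).comp A with hb_def
  have hsa_a : IsSelfAdjoint a := ((nonneg_iff_isPositive a).mp (self_comp_adj_nonneg A)).isSelfAdjoint
  have hsa_b : IsSelfAdjoint b := ((nonneg_iff_isPositive b).mp (adj_comp_self_nonneg A)).isSelfAdjoint
  have hkey : a.comp A = A.comp b := by ext x; simp [ha_def, hb_def]
  -- extension of a continuous map on Icc to ℝ
  let ext : C(Set.Icc (0:ℝ) R, ℝ) → (ℝ → ℝ) := fun g x => g (Set.projIcc 0 R hR x)
  have hext_cont : ∀ g, Continuous (ext g) := fun g => g.continuous.comp continuous_projIcc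
  -- the property
  let p : C(Set.Icc (0:ℝ) R, ℝ) → Prop := fun g =>
    (cfc (ext g) a).comp A = A.comp (cfc (ext g) b)
  have key : ∀ g : C(Set.Icc (0:ℝ) R, ℝ), p g := by
    intro g
    induction g using ContinuousMap.induction_on_of_compact with
    | const r =>
        show (cfc (ext (ContinuousMap.const _ r)) a).comp A = _
        have h1 : ext (ContinuousMap.const _ r) = fun _ => r := rfl
        rw [h1, cfc_const r a hsa_a, cfc_const r b hsa_b]
        ext x
        simp [Algebra.algebraMap_eq_smul_one]
    | id =>
        show (cfc (ext _) a).comp A = A.comp (cfc (ext _) b)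
        have ea : cfc (ext (ContinuousMap.restrict _ (ContinuousMap.id ℝ))) a = a := by
          rw [show cfc (ext (ContinuousMap.restrict _ (ContinuousMap.id ℝ))) a = cfc (id : ℝ → ℝ) a from
            cfc_congr fun x hx => by
              simp [ext, Set.projIcc_of_mem hR (ha hx)]]
          exact cfc_id ℝ a
        have eb : cfc (ext (ContinuousMap.restrict _ (ContinuousMap.id ℝ))) b = b := by
          rw [show cfc (ext (ContinuousMap.restrict _ (ContinuousMap.id ℝ))) b = cfc (id : ℝ → ℝ) b from
            cfc_congr fun x hx => by
              simp [ext, Set.projIcc_of_mem hR (hb hx)]]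
          exact cfc_id ℝ b
        rw [ea, eb, hkey]
    | star_id =>
        simp only [p, star_trivial] at *
        have ea : cfc (ext (ContinuousMap.restrict _ (ContinuousMap.id ℝ))) a = a := by
          rw [show cfc (ext (ContinuousMap.restrict _ (ContinuousMap.id ℝ))) a = cfc (id : ℝ → ℝ) a from
            cfc_congr fun x hx => by
              simp [ext, Set.projIcc_of_mem hR (ha hx)]]
          exact cfc_id ℝ a
        have eb : cfc (ext (ContinuousMap.restrict _ (ContinuousMap.id ℝ))) b = b := by
          rw [show cfc (ext (ContinuousMap.restrict _ (ContinuousMap.id ℝ))) b = cfc (id : ℝ → ℝ) b from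
            cfc_congr fun x hx => by
              simp [ext, Set.projIcc_of_mem hR (hb hx)]]
          exact cfc_id ℝ b
        rw [ea, eb, hkey]
    | add f g hf hg =>
        simp only [p] at *
        have h1 : ext (f + g) = fun x => ext f x + ext g x := rfl
        rw [h1,
          cfc_add a (ext f) (ext g) (hext_cont f).continuousOn (hext_cont g).continuousOn,
          cfc_add b (ext f) (ext g) (hext_cont f).continuousOn (hext_cont g).continuousOn,
          add_comp, comp_add, hf, hg]
    | mul f g hf hg =>
        simp only [p] at *
        have h1 : ext (f * g) = fun x => ext f x * ext g x := rfl
        rw [h1,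
          cfc_mul (ext f) (ext g) a (hext_cont f).continuousOn (hext_cont g).continuousOn,
          cfc_mul (ext f) (ext g) b (hext_cont f).continuousOn (hext_cont g).continuousOn]
        calc (cfc (ext f) a * cfc (ext g) a).comp A
            = (cfc (ext f) a).comp ((cfc (ext g) a).comp A) := rfl
          _ = (cfc (ext f) a).comp (A.comp (cfc (ext g) b)) := by rw [hg]
          _ = ((cfc (ext f) a).comp A).comp (cfc (ext g) b) := rfl
          _ = (A.comp (cfc (ext f) b)).comp (cfc (ext g) b) := by rw [hf]
          _ = A.comp (cfc (ext f) b * cfc (ext g) b) := rfl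
    | frequently g hg =>
        have hclosed : IsClosed {g : C(Set.Icc (0:ℝ) R, ℝ) | p g} := by
          have hΦ : Continuous fun g : C(Set.Icc (0:ℝ) R, ℝ) => (cfc (ext g) a).comp A := by
            have h1 : ∀ g : C(Set.Icc (0:ℝ) R, ℝ), cfc (ext g) a =
                cfcHom hsa_a (g.comp ⟨Set.inclusion ha, continuous_inclusion ha⟩) := by
              intro g
              rw [cfc_apply (ext g) a hsa_a (hext_cont g).continuousOn]
              congr 1
              ext x
              simp [ext, Set.projIcc_of_mem hR (ha x.2)]
            simp only [h1]
            exact ((compL ℂ X Z Z).flip A).continuous.comp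
              ((cfcHom_isClosedEmbedding hsa_a).continuous.comp (ContinuousMap.continuous_precomp _))
          have hΨ : Continuous fun g : C(Set.Icc (0:ℝ) R, ℝ) => A.comp (cfc (ext g) b) := by
            have h1 : ∀ g : C(Set.Icc (0:ℝ) R, ℝ), cfc (ext g) b =
                cfcHom hsa_b (g.comp ⟨Set.inclusion hb, continuous_inclusion hb⟩) := by
              intro g
              rw [cfc_apply (ext g) b hsa_b (hext_cont g).continuousOn]
              congr 1
              ext x
              simp [ext, Set.projIcc_of_mem hR (hb x.2)]
            simp only [h1]
            exact ((compL ℂ X X Z A)).continuous.comp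
              ((cfcHom_isClosedEmbedding hsa_b).continuous.comp (ContinuousMap.continuous_precomp _))
          exact isClosed_eq hΦ hΨ
        exact hclosed.mem_of_frequently_of_tendsto hg Filter.tendsto_id
  have := key ⟨_, hf.restrict⟩
  simp only [p] at this
  have hfa : cfc (ext ⟨_, hf.restrict⟩) a = cfc f a :=
    cfc_congr fun x hx => by simp [ext, Set.projIcc_of_mem hR (ha hx)]
  have hfb : cfc (ext ⟨_, hf.restrict⟩) b = cfc f b :=
    cfc_congr fun x hx => by simp [ext, Set.projIcc_of_mem hR (hb hx)]
  rwa [hfa, hfb] at this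

open RCLike in
lemma norm_cfc_sq (a : H →L[ℂ] H) (ha : IsSelfAdjoint a) (f : ℝ → ℝ)
    (hf : ContinuousOn f (spectrum ℝ a)) (v : H) :
    ‖cfc f a v‖ ^ 2 = re (⟪cfc (fun x => f x * f x) a v, v⟫_ℂ) := by
  have hsa : IsSelfAdjoint (cfc f a) := cfc_predicate f a
  have hsym := isSelfAdjoint_iff_isSymmetric.mp hsa
  have h1 : (⟪cfc f a v, cfc f a v⟫_ℂ) = ⟪cfc f a (cfc f a v), v⟫_ℂ := (hsym _ _).symm
  rw [← inner_self_eq_norm_sq (𝕜 := ℂ), h1, cfc_mul f f a hf hf]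
  rfl

open RCLike in
lemma norm_cfc_sqrt (c : H →L[ℂ] H) (hc : (0 : H →L[ℂ] H) ≤ c) (v : H) :
    ‖cfc Real.sqrt c v‖ ^ 2 = re (⟪c v, v⟫_ℂ) := by
  have hsa : IsSelfAdjoint c := ((nonneg_iff_isPositive c).mp hc).isSelfAdjoint
  rw [norm_cfc_sq c hsa Real.sqrt Real.continuous_sqrt.continuousOn v]
  congr 2
  rw [show cfc (fun x => Real.sqrt x * Real.sqrt x) c = cfc (id : ℝ → ℝ) c from
    cfc_congr fun x hx => Real.mul_self_sqrt (spectrum_nonneg_of_nonneg hc hx), cfc_id ℝ c]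

lemma norm_eq_of_sq_eq {x y : ℝ} (hx : 0 ≤ x) (hy : 0 ≤ y) (h : x ^ 2 = y ^ 2) : x = y := by
  nlinarith

end Auxiliary

open RCLike
open scoped InnerProductSpace

/-- Link condition lifting: let `A : X → Z` (the forward operator, viewed with values in
the larger space `Z ⊇ Y`), `E : Y → Z` the embedding, and `T = E^* A`.  If
`m ‖ψ(AA^*) v‖ ≤ ‖(EE^*)^{1/2} v‖ ≤ M ‖ψ(AA^*) v‖` for all `v`, then with
`Θ(λ) = √λ ψ(λ)` one has `m ‖Θ(A^*A) w‖ ≤ ‖(T^*T)^{1/2} w‖ ≤ M ‖Θ(A^*A) w‖` for all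
`w ∈ X`.  Operator functions are realized via the continuous functional calculus `cfc`. -/
theorem link_condition_lifting
    {X Y Z : Type*}
    [NormedAddCommGroup X] [InnerProductSpace ℂ X] [CompleteSpace X]
    [NormedAddCommGroup Y] [InnerProductSpace ℂ Y] [CompleteSpace Y]
    [NormedAddCommGroup Z] [InnerProductSpace ℂ Z] [CompleteSpace Z]
    (A : X →L[ℂ] Z) (E : Y →L[ℂ] Z) (ψ : ℝ → ℝ) (hψ : IndexFun ψ)
    (m M : ℝ) (hm : 0 < m) (hm1 : m ≤ 1) (hM : 1 ≤ M)
    (hlink : ∀ v : Z,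
      m * ‖cfc ψ (A.comp (adjoint A)) v‖ ≤ ‖cfc Real.sqrt (E.comp (adjoint E)) v‖ ∧
      ‖cfc Real.sqrt (E.comp (adjoint E)) v‖ ≤ M * ‖cfc ψ (A.comp (adjoint A)) v‖) :
    ∀ w : X,
      m * ‖cfc (fun l => Real.sqrt l * ψ l) ((adjoint A).comp A) w‖ ≤
        ‖cfc Real.sqrt ((adjoint ((adjoint E).comp A)).comp ((adjoint E).comp A)) w‖ ∧
      ‖cfc Real.sqrt ((adjoint ((adjoint E).comp A)).comp ((adjoint E).comp A)) w‖ ≤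
        M * ‖cfc (fun l => Real.sqrt l * ψ l) ((adjoint A).comp A) w‖ := by
  intro w
  set a := A.comp (adjoint A) with ha_def
  set b := (adjoint A).comp A with hb_def
  set e := E.comp (adjoint E) with he_def
  set T := (adjoint E).comp A with hT_def
  set t := (adjoint T).comp T with ht_def
  have hb_nn := adj_comp_self_nonneg A
  have ha_nn := self_comp_adj_nonneg A
  have he_nn := self_comp_adj_nonneg E
  have ht_nn := adj_comp_self_nonneg T
  have hb_sa : IsSelfAdjoint b := ((nonneg_iff_isPositive b).mp hb_nn).isSelfAdjoint
  have hb_spec : spectrum ℝ b ⊆ Set.Ici 0 := fun x hx => spectrum_nonneg_of_nonneg hb_nn hx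
  have hψb : ContinuousOn ψ (spectrum ℝ b) := hψ.1.mono hb_spec
  -- Step 1 : ‖√t w‖ = ‖√e (A w)‖ ( = ‖T w‖ )
  have step1 : ‖cfc Real.sqrt t w‖ = ‖cfc Real.sqrt e (A w)‖ := by
    refine norm_eq_of_sq_eq (norm_nonneg _) (norm_nonneg _) ?_
    rw [norm_cfc_sqrt t ht_nn w, norm_cfc_sqrt e he_nn (A w)]
    have h1 : (⟪t w, w⟫_ℂ) = ⟪T w, T w⟫_ℂ := adjoint_inner_left T w (T w)
    have h2 : (⟪e (A w), A w⟫_ℂ) = ⟪adjoint E (A w), adjoint E (A w)⟫_ℂ :=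
      (adjoint_inner_right E (adjoint E (A w)) (A w)).symm
    have h3 : T w = adjoint E (A w) := rfl
    rw [h1, h2, h3]
  -- Step 2 : ‖ψ(a) (A w)‖ = ‖Θ(b) w‖
  have step2 : ‖cfc ψ a (A w)‖ = ‖cfc (fun l => Real.sqrt l * ψ l) b w‖ := by
    set R : ℝ := max (‖a‖ * ‖(1 : Z →L[ℂ] Z)‖) (‖b‖ * ‖(1 : X →L[ℂ] X)‖) with hR_def
    have hRa : spectrum ℝ a ⊆ Set.Icc 0 R :=
      (spectrum_subset_Icc a ha_nn).trans (Set.Icc_subset_Icc_right (le_max_left _ _))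
    have hRb : spectrum ℝ b ⊆ Set.Icc 0 R :=
      (spectrum_subset_Icc b hb_nn).trans (Set.Icc_subset_Icc_right (le_max_right _ _))
    have hR : (0:ℝ) ≤ R :=
      le_max_of_le_left (mul_nonneg (norm_nonneg _) (norm_nonneg _))
    have hint := intertwine A hR hRa hRb ψ (hψ.1.mono (Set.Icc_subset_Ici_self))
    have h0 : cfc ψ a (A w) = A (cfc ψ b w) := by
      have := ContinuousLinearMap.ext_iff.mp hint w
      simpa using this
    refine norm_eq_of_sq_eq (norm_nonneg _) (norm_nonneg _) ?_
    set u := cfc ψ b w with hu_def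
    have hΘ : ContinuousOn (fun l => Real.sqrt l * ψ l) (spectrum ℝ b) :=
      Real.continuous_sqrt.continuousOn.mul hψb
    rw [h0, norm_cfc_sq b hb_sa (fun l => Real.sqrt l * ψ l) hΘ w]
    -- ‖A u‖ ^ 2 = re ⟪b u, u⟫
    have h1 : ‖A u‖ ^ 2 = re (⟪b u, u⟫_ℂ) := by
      rw [← inner_self_eq_norm_sq (𝕜 := ℂ)]
      congr 1
      exact (adjoint_inner_left A u (A u)).symm
    rw [h1]
    -- b u = cfc (fun l => l * ψ l) b w
    have h2 : b u = cfc (fun l => l * ψ l) b w := by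
      rw [hu_def, show cfc (fun l : ℝ => l * ψ l) b = cfc (id : ℝ → ℝ) b * cfc ψ b from
        cfc_mul id ψ b continuous_id.continuousOn hψb, cfc_id ℝ b]
      rfl
    rw [h2]
    have hsym := isSelfAdjoint_iff_isSymmetric.mp (cfc_predicate ψ b : IsSelfAdjoint (cfc ψ b))
    have h3 : (⟪cfc (fun l => l * ψ l) b w, u⟫_ℂ) = ⟪cfc ψ b (cfc (fun l => l * ψ l) b w), w⟫_ℂ :=
      (hsym (cfc (fun l => l * ψ l) b w) w).symm
    rw [h3]
    have h4 : cfc ψ b (cfc (fun l => l * ψ l) b w) = cfc (fun l => ψ l * (l * ψ l)) b w := by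
      rw [cfc_mul ψ (fun l => l * ψ l) b hψb (continuous_id.continuousOn.mul hψb)]
      rfl
    rw [h4]
    have h5 : cfc (fun x => (fun l => Real.sqrt l * ψ l) x * (fun l => Real.sqrt l * ψ l) x) b =
        cfc (fun l => ψ l * (l * ψ l)) b := by
      refine cfc_congr fun x hx => ?_
      have hx0 : (0:ℝ) ≤ x := hb_spec hx
      have : Real.sqrt x * ψ x * (Real.sqrt x * ψ x)
          = (Real.sqrt x * Real.sqrt x) * (ψ x * ψ x) := by ring
      rw [this, Real.mul_self_sqrt hx0]; ring
    rw [h5]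
  obtain ⟨l1, l2⟩ := hlink (A w)
  rw [step2, ← step1] at l1 l2
  exact ⟨l1, l2⟩
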